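/- Consider the cubic polynomial P(t) = A t³ + B t² + C t + D with A = ν²(1−α)⁶, B = 3ν²α²(1−α)⁴, C = 2α³[ν²(2−α−4α²+3α³) + σ²(2−5α+4α²−α³)], D = 2α⁴[ν²(2α²−1) + σ²(2α−1)], where ν, σ > 0. Then the discriminant of P, namely −27A²D² + 18ABCD − 4AC³ − 4B³D + B²C², is negative for all sufficiently small α ≠ 0; consequently P has exactly one real root. -/
import Mathlib

set_option maxHeartbeats 1000000

/-- A cubic with positive leading coefficient has a real root (IVT). -/
lemma cubic_exists_root (A B C D : ℝ) (hA : 0 < A) :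
    ∃ t : ℝ, A * t ^ 3 + B * t ^ 2 + C * t + D = 0 := by
  set M : ℝ := (|B| + |C| + |D|) / A + 1 with hM
  have hM1 : 1 ≤ M := by
    have h : 0 ≤ (|B| + |C| + |D|) / A := by positivity
    rw [hM]; linarith
  have hM0 : (0 : ℝ) < M := by linarith
  have hMsq : (0 : ℝ) ≤ M ^ 2 := sq_nonneg M
  have e1 : A * M ^ 3 = |B| * M ^ 2 + |C| * M ^ 2 + |D| * M ^ 2 + A * M ^ 2 := by
    have h : A * M = |B| + |C| + |D| + A := by
      rw [hM]; field_simp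
    linear_combination M ^ 2 * h
  have hB2 : -|B| * M ^ 2 ≤ B * M ^ 2 :=
    mul_le_mul_of_nonneg_right (neg_abs_le B) hMsq
  have hB3 : B * M ^ 2 ≤ |B| * M ^ 2 :=
    mul_le_mul_of_nonneg_right (le_abs_self B) hMsq
  have hCM : |C| * M ≤ |C| * M ^ 2 := by
    have h := mul_nonneg (abs_nonneg C) (by nlinarith : (0:ℝ) ≤ M ^ 2 - M)
    nlinarith
  have hC2 : -|C| * M ≤ C * M := mul_le_mul_of_nonneg_right (neg_abs_le C) hM0.le
  have hC3 : -C * M ≤ |C| * M := mul_le_mul_of_nonneg_right (neg_le_abs C) hM0.le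
  have hDM : |D| ≤ |D| * M ^ 2 := by
    have h := mul_nonneg (abs_nonneg D) (by nlinarith : (0:ℝ) ≤ M ^ 2 - 1)
    nlinarith
  have hD2 := neg_abs_le D
  have hD3 := le_abs_self D
  have hAM2 : A ≤ A * M ^ 2 := by
    nlinarith [mul_nonneg hA.le (by nlinarith : (0:ℝ) ≤ M ^ 2 - 1)]
  have hfM : 0 < A * M ^ 3 + B * M ^ 2 + C * M + D := by nlinarith
  have hfm : A * (-M) ^ 3 + B * (-M) ^ 2 + C * (-M) + D < 0 := by nlinarith
  have hcont : ContinuousOn (fun t : ℝ => A * t ^ 3 + B * t ^ 2 + C * t + D)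
      (Set.Icc (-M) M) := (by fun_prop : Continuous fun t : ℝ =>
        A * t ^ 3 + B * t ^ 2 + C * t + D).continuousOn
  have hle : (-M : ℝ) ≤ M := by linarith
  have hiv := intermediate_value_Icc hle hcont
  have h0 : (0 : ℝ) ∈ Set.Icc (A * (-M) ^ 3 + B * (-M) ^ 2 + C * (-M) + D)
      (A * M ^ 3 + B * M ^ 2 + C * M + D) := ⟨hfm.le, hfM.le⟩
  obtain ⟨t, _, ht⟩ := hiv h0
  exact ⟨t, ht⟩

/-- If the discriminant of a cubic is negative, it has at most one real root. -/
lemma cubic_root_unique (A B C D : ℝ)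
    (hdisc : -27 * A ^ 2 * D ^ 2 + 18 * A * B * C * D - 4 * A * C ^ 3
      - 4 * B ^ 3 * D + B ^ 2 * C ^ 2 < 0)
    {t1 t2 : ℝ} (h1 : A * t1 ^ 3 + B * t1 ^ 2 + C * t1 + D = 0)
    (h2 : A * t2 ^ 3 + B * t2 ^ 2 + C * t2 + D = 0) : t2 = t1 := by
  by_contra hne
  have hD : D = -(A * t1 ^ 3 + B * t1 ^ 2 + C * t1) := by linarith
  subst hD
  have key : -27 * A ^ 2 * (-(A * t1 ^ 3 + B * t1 ^ 2 + C * t1)) ^ 2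
      + 18 * A * B * C * (-(A * t1 ^ 3 + B * t1 ^ 2 + C * t1)) - 4 * A * C ^ 3
      - 4 * B ^ 3 * (-(A * t1 ^ 3 + B * t1 ^ 2 + C * t1)) + B ^ 2 * C ^ 2
      = (A * t1 ^ 2 + (B + A * t1) * t1 + (C + B * t1 + A * t1 ^ 2)) ^ 2
        * ((B + A * t1) ^ 2 - 4 * A * (C + B * t1 + A * t1 ^ 2)) := by ring
  have hfac : (t2 - t1) * (A * t2 ^ 2 + (B + A * t1) * t2
      + (C + B * t1 + A * t1 ^ 2)) = 0 := by linear_combination h2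
  have hquad : A * t2 ^ 2 + (B + A * t1) * t2 + (C + B * t1 + A * t1 ^ 2) = 0 := by
    rcases mul_eq_zero.mp hfac with h | h
    · exact absurd (by linarith : t2 = t1) hne
    · exact h
  have hsq : (2 * A * t2 + (B + A * t1)) ^ 2
      = (B + A * t1) ^ 2 - 4 * A * (C + B * t1 + A * t1 ^ 2) := by
    linear_combination 4 * A * hquad
  rw [key] at hdisc
  nlinarith [sq_nonneg (A * t1 ^ 2 + (B + A * t1) * t1 + (C + B * t1 + A * t1 ^ 2)),
    sq_nonneg (2 * A * t2 + (B + A * t1)),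
    sq_nonneg ((A * t1 ^ 2 + (B + A * t1) * t1 + (C + B * t1 + A * t1 ^ 2))
      * (2 * A * t2 + (B + A * t1)))]

theorem cubic_discriminant_negative (ν σ : ℝ) (hν : 0 < ν) (hσ : 0 < σ) :
    ∃ ε > 0, ∀ α : ℝ, α ≠ 0 → |α| < ε →
      (let A := ν ^ 2 * (1 - α) ^ 6
       let B := 3 * ν ^ 2 * α ^ 2 * (1 - α) ^ 4
       let C := 2 * α ^ 3 * (ν ^ 2 * (2 - α - 4 * α ^ 2 + 3 * α ^ 3)
         + σ ^ 2 * (2 - 5 * α + 4 * α ^ 2 - α ^ 3))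
       let D := 2 * α ^ 4 * (ν ^ 2 * (2 * α ^ 2 - 1) + σ ^ 2 * (2 * α - 1))
       (-27 * A ^ 2 * D ^ 2 + 18 * A * B * C * D - 4 * A * C ^ 3
          - 4 * B ^ 3 * D + B ^ 2 * C ^ 2 < 0)
         ∧ ∃! t : ℝ, A * t ^ 3 + B * t ^ 2 + C * t + D = 0) := by
  -- the discriminant equals α^8 * g α, where g is continuous and g 0 < 0
  set g : ℝ → ℝ := fun a =>
    -108 * (ν ^ 2 * (1 - a) ^ 6) ^ 2
        * (ν ^ 2 * (2 * a ^ 2 - 1) + σ ^ 2 * (2 * a - 1)) ^ 2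
    + a * (72 * (ν ^ 2 * (1 - a) ^ 6) * (3 * ν ^ 2 * (1 - a) ^ 4)
          * (ν ^ 2 * (2 - a - 4 * a ^ 2 + 3 * a ^ 3)
            + σ ^ 2 * (2 - 5 * a + 4 * a ^ 2 - a ^ 3))
          * (ν ^ 2 * (2 * a ^ 2 - 1) + σ ^ 2 * (2 * a - 1))
        - 32 * (ν ^ 2 * (1 - a) ^ 6)
          * (ν ^ 2 * (2 - a - 4 * a ^ 2 + 3 * a ^ 3)
            + σ ^ 2 * (2 - 5 * a + 4 * a ^ 2 - a ^ 3)) ^ 3)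
    + a ^ 2 * (-8 * (3 * ν ^ 2 * (1 - a) ^ 4) ^ 3
          * (ν ^ 2 * (2 * a ^ 2 - 1) + σ ^ 2 * (2 * a - 1))
        + 4 * (3 * ν ^ 2 * (1 - a) ^ 4) ^ 2
          * (ν ^ 2 * (2 - a - 4 * a ^ 2 + 3 * a ^ 3)
            + σ ^ 2 * (2 - 5 * a + 4 * a ^ 2 - a ^ 3)) ^ 2) with hg
  have hg0 : g 0 < 0 := by
    have h1 : g 0 = -(108 * ν ^ 4 * (ν ^ 2 + σ ^ 2) ^ 2) := by rw [hg]; ring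
    have h2 : 0 < 108 * ν ^ 4 * (ν ^ 2 + σ ^ 2) ^ 2 := by positivity
    linarith
  have hcont : ContinuousAt g 0 := by
    rw [hg]; fun_prop
  have hnhds : g ⁻¹' Set.Iio 0 ∈ nhds (0 : ℝ) :=
    hcont.preimage_mem_nhds (Iio_mem_nhds hg0)
  obtain ⟨δ, hδ, hball⟩ := Metric.mem_nhds_iff.mp hnhds
  refine ⟨min δ (1 / 2), lt_min hδ (by norm_num), ?_⟩
  intro α hα hαlt
  have hαδ : |α| < δ := lt_of_lt_of_le hαlt (min_le_left _ _)
  have hαhalf : |α| < 1 / 2 := lt_of_lt_of_le hαlt (min_le_right _ _)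
  have hα1 : α < 1 := lt_of_le_of_lt (le_abs_self α) (by linarith)
  have hgα : g α < 0 := hball (by simpa [Real.dist_eq] using hαδ)
  intro A B C D
  have hα8 : 0 < α ^ 8 := by positivity
  have hdneg : -27 * A ^ 2 * D ^ 2 + 18 * A * B * C * D - 4 * A * C ^ 3
      - 4 * B ^ 3 * D + B ^ 2 * C ^ 2 < 0 := by
    show -27 * (ν ^ 2 * (1 - α) ^ 6) ^ 2
        * (2 * α ^ 4 * (ν ^ 2 * (2 * α ^ 2 - 1) + σ ^ 2 * (2 * α - 1))) ^ 2
      + 18 * (ν ^ 2 * (1 - α) ^ 6) * (3 * ν ^ 2 * α ^ 2 * (1 - α) ^ 4)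
        * (2 * α ^ 3 * (ν ^ 2 * (2 - α - 4 * α ^ 2 + 3 * α ^ 3)
          + σ ^ 2 * (2 - 5 * α + 4 * α ^ 2 - α ^ 3)))
        * (2 * α ^ 4 * (ν ^ 2 * (2 * α ^ 2 - 1) + σ ^ 2 * (2 * α - 1)))
      - 4 * (ν ^ 2 * (1 - α) ^ 6)
        * (2 * α ^ 3 * (ν ^ 2 * (2 - α - 4 * α ^ 2 + 3 * α ^ 3)
          + σ ^ 2 * (2 - 5 * α + 4 * α ^ 2 - α ^ 3))) ^ 3
      - 4 * (3 * ν ^ 2 * α ^ 2 * (1 - α) ^ 4) ^ 3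
        * (2 * α ^ 4 * (ν ^ 2 * (2 * α ^ 2 - 1) + σ ^ 2 * (2 * α - 1)))
      + (3 * ν ^ 2 * α ^ 2 * (1 - α) ^ 4) ^ 2
        * (2 * α ^ 3 * (ν ^ 2 * (2 - α - 4 * α ^ 2 + 3 * α ^ 3)
          + σ ^ 2 * (2 - 5 * α + 4 * α ^ 2 - α ^ 3))) ^ 2 < 0
    have heq : -27 * (ν ^ 2 * (1 - α) ^ 6) ^ 2
        * (2 * α ^ 4 * (ν ^ 2 * (2 * α ^ 2 - 1) + σ ^ 2 * (2 * α - 1))) ^ 2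
      + 18 * (ν ^ 2 * (1 - α) ^ 6) * (3 * ν ^ 2 * α ^ 2 * (1 - α) ^ 4)
        * (2 * α ^ 3 * (ν ^ 2 * (2 - α - 4 * α ^ 2 + 3 * α ^ 3)
          + σ ^ 2 * (2 - 5 * α + 4 * α ^ 2 - α ^ 3)))
        * (2 * α ^ 4 * (ν ^ 2 * (2 * α ^ 2 - 1) + σ ^ 2 * (2 * α - 1)))
      - 4 * (ν ^ 2 * (1 - α) ^ 6)
        * (2 * α ^ 3 * (ν ^ 2 * (2 - α - 4 * α ^ 2 + 3 * α ^ 3)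
          + σ ^ 2 * (2 - 5 * α + 4 * α ^ 2 - α ^ 3))) ^ 3
      - 4 * (3 * ν ^ 2 * α ^ 2 * (1 - α) ^ 4) ^ 3
        * (2 * α ^ 4 * (ν ^ 2 * (2 * α ^ 2 - 1) + σ ^ 2 * (2 * α - 1)))
      + (3 * ν ^ 2 * α ^ 2 * (1 - α) ^ 4) ^ 2
        * (2 * α ^ 3 * (ν ^ 2 * (2 - α - 4 * α ^ 2 + 3 * α ^ 3)
          + σ ^ 2 * (2 - 5 * α + 4 * α ^ 2 - α ^ 3))) ^ 2
        = α ^ 8 * g α := by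
      rw [hg]; ring
    rw [heq]
    exact mul_neg_of_pos_of_neg hα8 hgα
  refine ⟨hdneg, ?_⟩
  have hApos : 0 < A := by
    show 0 < ν ^ 2 * (1 - α) ^ 6
    have h1 : (0 : ℝ) < 1 - α := by linarith
    positivity
  obtain ⟨t, ht⟩ := cubic_exists_root A B C D hApos
  exact ⟨t, ht, fun y hy => cubic_root_unique A B C D hdneg ht hy⟩
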